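/- Let (H₁, H₂, σ) be a Hopf truss over a field k. Then σ(a) = a ∘ 1 and σ(a ∘ b) = a ∘ σ(b) for all a, b ∈ H. -/

import Mathlib

open TensorProduct

noncomputable def mbar (k : Type*) {H : Type*} [Field k] [Ring H] [HopfAlgebra k H]
    (Φ : H →ₗ[k] H) (m : H ⊗[k] H →ₗ[k] H) : H ⊗[k] H →ₗ[k] H :=
  (LinearMap.mul' k H) ∘ₗ (TensorProduct.map Φ m) ∘ₗ
    (TensorProduct.assoc k H H H).toLinearMap ∘ₗ
    (TensorProduct.map Coalgebra.comul LinearMap.id)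

/-- The map `a ⊗ b ⊗ c ↦ ρ(a₁ ⊗ b) · λ(σ(a₂)) · ρ(a₃ ⊗ c)`. -/
noncomputable def trussRHS (k : Type*) {H : Type*} [Field k] [Ring H] [HopfAlgebra k H]
    (σ : H →ₗ[k] H) (ρ : H ⊗[k] H →ₗ[k] H) : H ⊗[k] (H ⊗[k] H) →ₗ[k] H :=
  (LinearMap.mul' k H) ∘ₗ
    TensorProduct.map ρ
      ((LinearMap.mul' k H) ∘ₗ
        TensorProduct.map ((HopfAlgebra.antipode (R := k)) ∘ₗ σ) ρ ∘ₗ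
        (TensorProduct.assoc k H H H).toLinearMap) ∘ₗ
    (TensorProduct.tensorTensorTensorComm k H (H ⊗[k] H) H H).toLinearMap ∘ₗ
    TensorProduct.map ((TensorProduct.map LinearMap.id Coalgebra.comul) ∘ₗ Coalgebra.comul)
      LinearMap.id

section ConvAux
variable {k H : Type*} [Field k] [Ring H] [HopfAlgebra k H]

noncomputable def conv (u v : H →ₗ[k] H) : H →ₗ[k] H :=
  LinearMap.mul' k H ∘ₗ TensorProduct.map u v ∘ₗ Coalgebra.comul

noncomputable def convUnit (k H : Type*) [Field k] [Ring H] [HopfAlgebra k H] : H →ₗ[k] H :=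
  Algebra.linearMap k H ∘ₗ Coalgebra.counit

theorem conv_assoc' (u v w : H →ₗ[k] H) : conv (conv u v) w = conv u (conv v w) := by
  unfold conv
  have h1 : TensorProduct.map ((LinearMap.mul' k H) ∘ₗ TensorProduct.map u v ∘ₗ Coalgebra.comul) w
      = (TensorProduct.map ((LinearMap.mul' k H) ∘ₗ TensorProduct.map u v) w) ∘ₗ
        (Coalgebra.comul (R := k)).rTensor H := by
    ext x y; simp
  have h2 : TensorProduct.map u ((LinearMap.mul' k H) ∘ₗ TensorProduct.map v w ∘ₗ Coalgebra.comul)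
      = (TensorProduct.map u ((LinearMap.mul' k H) ∘ₗ TensorProduct.map v w)) ∘ₗ
        (Coalgebra.comul (R := k)).lTensor H := by
    ext x y; simp
  have h3 : (LinearMap.mul' k H) ∘ₗ (TensorProduct.map ((LinearMap.mul' k H) ∘ₗ TensorProduct.map u v) w)
        ∘ₗ (TensorProduct.assoc k H H H).symm.toLinearMap
      = (LinearMap.mul' k H) ∘ₗ TensorProduct.map u ((LinearMap.mul' k H) ∘ₗ TensorProduct.map v w) := by
    ext a b c
    simp [mul_assoc]
  have h4 : (Coalgebra.comul (R := k)).rTensor H ∘ₗ Coalgebra.comul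
      = (TensorProduct.assoc k H H H).symm.toLinearMap ∘ₗ (Coalgebra.comul (R := k)).lTensor H ∘ₗ Coalgebra.comul := by
    rw [Coalgebra.coassoc_symm]
  rw [h1, h2, LinearMap.comp_assoc, LinearMap.comp_assoc, h4]
  simp only [← LinearMap.comp_assoc] at h3 ⊢
  rw [h3]

theorem conv_unit_right (u : H →ₗ[k] H) : conv u (convUnit k H) = u := by
  unfold conv convUnit
  have h1 : TensorProduct.map u ((Algebra.linearMap k H) ∘ₗ (Coalgebra.counit (R := k)))
      = TensorProduct.map u (Algebra.linearMap k H) ∘ₗ LinearMap.lTensor H (Coalgebra.counit (R := k) (A := H)) := by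
    ext x y; simp
  have h2 : (LinearMap.mul' k H) ∘ₗ TensorProduct.map u (Algebra.linearMap k H) ∘ₗ
      (TensorProduct.mk k H k).flip 1 = u := by
    ext a; simp
  rw [h1, LinearMap.comp_assoc, Coalgebra.lTensor_counit_comp_comul]
  simp only [← LinearMap.comp_assoc] at h2 ⊢
  exact h2

theorem conv_unit_left (u : H →ₗ[k] H) : conv (convUnit k H) u = u := by
  unfold conv convUnit
  have h1 : TensorProduct.map ((Algebra.linearMap k H) ∘ₗ (Coalgebra.counit (R := k))) u
      = TensorProduct.map (Algebra.linearMap k H) u ∘ₗ LinearMap.rTensor H (Coalgebra.counit (R := k) (A := H)) := by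
    ext x y; simp
  have h2 : (LinearMap.mul' k H) ∘ₗ TensorProduct.map (Algebra.linearMap k H) u ∘ₗ
      TensorProduct.mk k k H 1 = u := by
    ext a; simp
  rw [h1, LinearMap.comp_assoc, Coalgebra.rTensor_counit_comp_comul]
  simp only [← LinearMap.comp_assoc] at h2 ⊢
  exact h2

theorem conv_antipode_right (φ : H →ₗ[k] H)
    (h1 : Coalgebra.comul ∘ₗ φ = TensorProduct.map φ φ ∘ₗ Coalgebra.comul)
    (h2 : Coalgebra.counit ∘ₗ φ = (Coalgebra.counit (R := k))) :
    conv φ ((HopfAlgebra.antipode (R := k)) ∘ₗ φ) = convUnit k H := by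
  unfold conv convUnit
  have h3 : TensorProduct.map φ ((HopfAlgebra.antipode (R := k)) ∘ₗ φ)
      = (HopfAlgebra.antipode (R := k)).lTensor H ∘ₗ TensorProduct.map φ φ := by
    ext x y; simp
  rw [h3, LinearMap.comp_assoc, ← h1, ← LinearMap.comp_assoc, ← LinearMap.comp_assoc,
    LinearMap.comp_assoc (Coalgebra.comul) _ _]
  rw [HopfAlgebra.mul_antipode_lTensor_comul, LinearMap.comp_assoc, h2]

theorem conv_antipode_left (φ : H →ₗ[k] H)
    (h1 : Coalgebra.comul ∘ₗ φ = TensorProduct.map φ φ ∘ₗ Coalgebra.comul)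
    (h2 : Coalgebra.counit ∘ₗ φ = (Coalgebra.counit (R := k))) :
    conv ((HopfAlgebra.antipode (R := k)) ∘ₗ φ) φ = convUnit k H := by
  unfold conv convUnit
  have h3 : TensorProduct.map ((HopfAlgebra.antipode (R := k)) ∘ₗ φ) φ
      = (HopfAlgebra.antipode (R := k)).rTensor H ∘ₗ TensorProduct.map φ φ := by
    ext x y; simp
  rw [h3, LinearMap.comp_assoc, ← h1, ← LinearMap.comp_assoc, ← LinearMap.comp_assoc,
    LinearMap.comp_assoc (Coalgebra.comul) _ _]
  rw [HopfAlgebra.mul_antipode_rTensor_comul, LinearMap.comp_assoc, h2]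

end ConvAux

theorem stmt8 (k H : Type*) [Field k] [Ring H] [HopfAlgebra k H]
    (ρ : H ⊗[k] H →ₗ[k] H) (σ : H →ₗ[k] H)
    (hρ_assoc : ρ ∘ₗ TensorProduct.map LinearMap.id ρ
      = ρ ∘ₗ TensorProduct.map ρ LinearMap.id ∘ₗ
          (TensorProduct.assoc k H H H).symm.toLinearMap)
    (hρ_comul : Coalgebra.comul ∘ₗ ρ
      = (TensorProduct.map ρ ρ) ∘ₗ (TensorProduct.tensorTensorTensorComm k H H H H).toLinearMap
          ∘ₗ (TensorProduct.map Coalgebra.comul Coalgebra.comul))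
    (hρ_counit : Coalgebra.counit ∘ₗ ρ
      = (TensorProduct.lid k k).toLinearMap ∘ₗ
          TensorProduct.map Coalgebra.counit Coalgebra.counit)
    (hσ_comul : Coalgebra.comul ∘ₗ σ = TensorProduct.map σ σ ∘ₗ Coalgebra.comul)
    (hσ_counit : Coalgebra.counit ∘ₗ σ = Coalgebra.counit)
    (hcompat : ρ ∘ₗ TensorProduct.map LinearMap.id (LinearMap.mul' k H) = trussRHS k σ ρ)
    :
    (∀ a : H, σ a = ρ (a ⊗ₜ[k] (1 : H))) ∧
    (∀ a b : H, σ (ρ (a ⊗ₜ[k] b)) = ρ (a ⊗ₜ[k] σ b)) := by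
  -- abbreviations (plain defs, not `set`, to keep simp predictable)
  have hfΔ : Coalgebra.comul ∘ₗ (ρ ∘ₗ (TensorProduct.mk k H H).flip 1)
      = TensorProduct.map (ρ ∘ₗ (TensorProduct.mk k H H).flip 1)
          (ρ ∘ₗ (TensorProduct.mk k H H).flip 1) ∘ₗ Coalgebra.comul := by
    have e1 : TensorProduct.map (Coalgebra.comul (R := k)) (Coalgebra.comul (R := k)) ∘ₗ
        (TensorProduct.mk k H H).flip 1
        = (TensorProduct.mk k (H ⊗[k] H) (H ⊗[k] H)).flip ((1 : H) ⊗ₜ[k] (1 : H)) ∘ₗ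
          Coalgebra.comul := by
      ext a; simp [Algebra.TensorProduct.one_def]
    have e2 : TensorProduct.map ρ ρ ∘ₗ
        (TensorProduct.tensorTensorTensorComm k H H H H).toLinearMap ∘ₗ
        (TensorProduct.mk k (H ⊗[k] H) (H ⊗[k] H)).flip ((1 : H) ⊗ₜ[k] (1 : H))
        = TensorProduct.map (ρ ∘ₗ (TensorProduct.mk k H H).flip 1)
            (ρ ∘ₗ (TensorProduct.mk k H H).flip 1) := by
      ext a b; simp [TensorProduct.tensorTensorTensorComm_tmul]
    calc Coalgebra.comul ∘ₗ (ρ ∘ₗ (TensorProduct.mk k H H).flip 1)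
        = (Coalgebra.comul ∘ₗ ρ) ∘ₗ (TensorProduct.mk k H H).flip 1 := by
          simp only [LinearMap.comp_assoc]
      _ = TensorProduct.map ρ ρ ∘ₗ (TensorProduct.tensorTensorTensorComm k H H H H).toLinearMap ∘ₗ
            (TensorProduct.map Coalgebra.comul Coalgebra.comul ∘ₗ (TensorProduct.mk k H H).flip 1) := by
          rw [hρ_comul]; simp only [LinearMap.comp_assoc]
      _ = (TensorProduct.map ρ ρ ∘ₗ (TensorProduct.tensorTensorTensorComm k H H H H).toLinearMap ∘ₗ
            (TensorProduct.mk k (H ⊗[k] H) (H ⊗[k] H)).flip ((1 : H) ⊗ₜ[k] (1 : H))) ∘ₗ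
            Coalgebra.comul := by
          rw [e1]; simp only [LinearMap.comp_assoc]
      _ = _ := by rw [e2]
  have hfε : Coalgebra.counit ∘ₗ (ρ ∘ₗ (TensorProduct.mk k H H).flip 1)
      = (Coalgebra.counit (R := k) (A := H)) := by
    have e3 : ((TensorProduct.lid k k).toLinearMap ∘ₗ
        TensorProduct.map (Coalgebra.counit (R := k) (A := H)) (Coalgebra.counit (R := k) (A := H))) ∘ₗ
        (TensorProduct.mk k H H).flip 1 = Coalgebra.counit := by
      ext a; simp
    calc Coalgebra.counit ∘ₗ (ρ ∘ₗ (TensorProduct.mk k H H).flip 1)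
        = (Coalgebra.counit ∘ₗ ρ) ∘ₗ (TensorProduct.mk k H H).flip 1 := by
          simp only [LinearMap.comp_assoc]
      _ = _ := by rw [hρ_counit]; exact e3
  -- key identity from compatibility at b = c = 1
  have keyA : (ρ ∘ₗ (TensorProduct.mk k H H).flip 1)
      = conv (ρ ∘ₗ (TensorProduct.mk k H H).flip 1)
          (conv ((HopfAlgebra.antipode (R := k)) ∘ₗ σ) (ρ ∘ₗ (TensorProduct.mk k H H).flip 1)) := by
    have hj := congrArg (fun (F : H ⊗[k] (H ⊗[k] H) →ₗ[k] H) =>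
      F ∘ₗ (TensorProduct.mk k H (H ⊗[k] H)).flip (((1 : H) ⊗ₜ[k] (1 : H)))) hcompat
    have hL : (ρ ∘ₗ TensorProduct.map LinearMap.id (LinearMap.mul' k H)) ∘ₗ
        (TensorProduct.mk k H (H ⊗[k] H)).flip ((1 : H) ⊗ₜ[k] (1 : H))
        = ρ ∘ₗ (TensorProduct.mk k H H).flip 1 := by
      ext a; simp
    have hR : trussRHS k σ ρ ∘ₗ
        (TensorProduct.mk k H (H ⊗[k] H)).flip ((1 : H) ⊗ₜ[k] (1 : H))
        = conv (ρ ∘ₗ (TensorProduct.mk k H H).flip 1)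
            (conv ((HopfAlgebra.antipode (R := k)) ∘ₗ σ) (ρ ∘ₗ (TensorProduct.mk k H H).flip 1)) := by
      have s1 : TensorProduct.map
          ((TensorProduct.map LinearMap.id Coalgebra.comul) ∘ₗ (Coalgebra.comul (R := k))) LinearMap.id ∘ₗ
          (TensorProduct.mk k H (H ⊗[k] H)).flip ((1 : H) ⊗ₜ[k] (1 : H))
          = (TensorProduct.mk k (H ⊗[k] (H ⊗[k] H)) (H ⊗[k] H)).flip ((1 : H) ⊗ₜ[k] (1 : H)) ∘ₗ
            (TensorProduct.map LinearMap.id Coalgebra.comul) ∘ₗ Coalgebra.comul := by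
        ext a; simp
      have s2 : ((LinearMap.mul' k H) ∘ₗ
          TensorProduct.map ρ
            ((LinearMap.mul' k H) ∘ₗ
              TensorProduct.map ((HopfAlgebra.antipode (R := k)) ∘ₗ σ) ρ ∘ₗ
              (TensorProduct.assoc k H H H).toLinearMap) ∘ₗ
          (TensorProduct.tensorTensorTensorComm k H (H ⊗[k] H) H H).toLinearMap) ∘ₗ
          (TensorProduct.mk k (H ⊗[k] (H ⊗[k] H)) (H ⊗[k] H)).flip ((1 : H) ⊗ₜ[k] (1 : H))
          = (LinearMap.mul' k H) ∘ₗ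
            TensorProduct.map (ρ ∘ₗ (TensorProduct.mk k H H).flip 1)
              ((LinearMap.mul' k H) ∘ₗ
                TensorProduct.map ((HopfAlgebra.antipode (R := k)) ∘ₗ σ)
                  (ρ ∘ₗ (TensorProduct.mk k H H).flip 1)) := by
        ext a b c
        simp [TensorProduct.tensorTensorTensorComm_tmul]
      have s3 : TensorProduct.map (ρ ∘ₗ (TensorProduct.mk k H H).flip 1)
            ((LinearMap.mul' k H) ∘ₗ
              TensorProduct.map ((HopfAlgebra.antipode (R := k)) ∘ₗ σ)
                (ρ ∘ₗ (TensorProduct.mk k H H).flip 1)) ∘ₗ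
            TensorProduct.map LinearMap.id (Coalgebra.comul (R := k))
          = TensorProduct.map (ρ ∘ₗ (TensorProduct.mk k H H).flip 1)
              ((LinearMap.mul' k H) ∘ₗ
                TensorProduct.map ((HopfAlgebra.antipode (R := k)) ∘ₗ σ)
                  (ρ ∘ₗ (TensorProduct.mk k H H).flip 1) ∘ₗ Coalgebra.comul) := by
        ext x y; simp
      unfold trussRHS
      calc ((LinearMap.mul' k H) ∘ₗ
          TensorProduct.map ρ
            ((LinearMap.mul' k H) ∘ₗ
              TensorProduct.map ((HopfAlgebra.antipode (R := k)) ∘ₗ σ) ρ ∘ₗ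
              (TensorProduct.assoc k H H H).toLinearMap) ∘ₗ
          (TensorProduct.tensorTensorTensorComm k H (H ⊗[k] H) H H).toLinearMap ∘ₗ
          TensorProduct.map ((TensorProduct.map LinearMap.id Coalgebra.comul) ∘ₗ Coalgebra.comul)
            LinearMap.id) ∘ₗ
          (TensorProduct.mk k H (H ⊗[k] H)).flip ((1 : H) ⊗ₜ[k] (1 : H))
          = ((LinearMap.mul' k H) ∘ₗ
            TensorProduct.map ρ
              ((LinearMap.mul' k H) ∘ₗ
                TensorProduct.map ((HopfAlgebra.antipode (R := k)) ∘ₗ σ) ρ ∘ₗ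
                (TensorProduct.assoc k H H H).toLinearMap) ∘ₗ
            (TensorProduct.tensorTensorTensorComm k H (H ⊗[k] H) H H).toLinearMap) ∘ₗ
            (TensorProduct.map ((TensorProduct.map LinearMap.id Coalgebra.comul) ∘ₗ Coalgebra.comul)
              LinearMap.id ∘ₗ
              (TensorProduct.mk k H (H ⊗[k] H)).flip ((1 : H) ⊗ₜ[k] (1 : H))) := by
            simp only [LinearMap.comp_assoc]
      _ = (((LinearMap.mul' k H) ∘ₗ
            TensorProduct.map ρ
              ((LinearMap.mul' k H) ∘ₗ
                TensorProduct.map ((HopfAlgebra.antipode (R := k)) ∘ₗ σ) ρ ∘ₗ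
                (TensorProduct.assoc k H H H).toLinearMap) ∘ₗ
            (TensorProduct.tensorTensorTensorComm k H (H ⊗[k] H) H H).toLinearMap) ∘ₗ
            (TensorProduct.mk k (H ⊗[k] (H ⊗[k] H)) (H ⊗[k] H)).flip ((1 : H) ⊗ₜ[k] (1 : H))) ∘ₗ
            ((TensorProduct.map LinearMap.id Coalgebra.comul) ∘ₗ Coalgebra.comul) := by
            rw [s1]; simp only [LinearMap.comp_assoc]
      _ = ((LinearMap.mul' k H) ∘ₗ
            TensorProduct.map (ρ ∘ₗ (TensorProduct.mk k H H).flip 1)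
              ((LinearMap.mul' k H) ∘ₗ
                TensorProduct.map ((HopfAlgebra.antipode (R := k)) ∘ₗ σ)
                  (ρ ∘ₗ (TensorProduct.mk k H H).flip 1))) ∘ₗ
            ((TensorProduct.map LinearMap.id Coalgebra.comul) ∘ₗ Coalgebra.comul) := by
            rw [s2]
      _ = (LinearMap.mul' k H) ∘ₗ
            (TensorProduct.map (ρ ∘ₗ (TensorProduct.mk k H H).flip 1)
              ((LinearMap.mul' k H) ∘ₗ
                TensorProduct.map ((HopfAlgebra.antipode (R := k)) ∘ₗ σ)
                  (ρ ∘ₗ (TensorProduct.mk k H H).flip 1)) ∘ₗ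
              TensorProduct.map LinearMap.id Coalgebra.comul) ∘ₗ Coalgebra.comul := by
            simp only [LinearMap.comp_assoc]
      _ = _ := by rw [s3]; rfl
    conv_lhs => rw [← hL]
    rw [hj, hR]
  -- convolution algebra manipulations
  have hinv_f : conv ((HopfAlgebra.antipode (R := k)) ∘ₗ (ρ ∘ₗ (TensorProduct.mk k H H).flip 1))
      (ρ ∘ₗ (TensorProduct.mk k H H).flip 1) = convUnit k H :=
    conv_antipode_left _ hfΔ hfε
  have hσinv : conv σ ((HopfAlgebra.antipode (R := k)) ∘ₗ σ) = convUnit k H :=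
    conv_antipode_right _ hσ_comul hσ_counit
  have step : conv ((HopfAlgebra.antipode (R := k)) ∘ₗ σ) (ρ ∘ₗ (TensorProduct.mk k H H).flip 1)
      = convUnit k H := by
    calc conv ((HopfAlgebra.antipode (R := k)) ∘ₗ σ) (ρ ∘ₗ (TensorProduct.mk k H H).flip 1)
        = conv (convUnit k H)
            (conv ((HopfAlgebra.antipode (R := k)) ∘ₗ σ) (ρ ∘ₗ (TensorProduct.mk k H H).flip 1)) :=
          (conv_unit_left _).symm
      _ = conv (conv ((HopfAlgebra.antipode (R := k)) ∘ₗ (ρ ∘ₗ (TensorProduct.mk k H H).flip 1))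
              (ρ ∘ₗ (TensorProduct.mk k H H).flip 1))
            (conv ((HopfAlgebra.antipode (R := k)) ∘ₗ σ) (ρ ∘ₗ (TensorProduct.mk k H H).flip 1)) := by
          rw [hinv_f]
      _ = conv ((HopfAlgebra.antipode (R := k)) ∘ₗ (ρ ∘ₗ (TensorProduct.mk k H H).flip 1))
            (conv (ρ ∘ₗ (TensorProduct.mk k H H).flip 1)
              (conv ((HopfAlgebra.antipode (R := k)) ∘ₗ σ) (ρ ∘ₗ (TensorProduct.mk k H H).flip 1))) :=
          conv_assoc' _ _ _
      _ = conv ((HopfAlgebra.antipode (R := k)) ∘ₗ (ρ ∘ₗ (TensorProduct.mk k H H).flip 1))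
            (ρ ∘ₗ (TensorProduct.mk k H H).flip 1) := by
          rw [← keyA]
      _ = convUnit k H := hinv_f
  have final : σ = ρ ∘ₗ (TensorProduct.mk k H H).flip 1 := by
    calc σ = conv σ (convUnit k H) := (conv_unit_right σ).symm
      _ = conv σ (conv ((HopfAlgebra.antipode (R := k)) ∘ₗ σ) (ρ ∘ₗ (TensorProduct.mk k H H).flip 1)) := by
          rw [step]
      _ = conv (conv σ ((HopfAlgebra.antipode (R := k)) ∘ₗ σ)) (ρ ∘ₗ (TensorProduct.mk k H H).flip 1) := by
          rw [conv_assoc']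
      _ = conv (convUnit k H) (ρ ∘ₗ (TensorProduct.mk k H H).flip 1) := by rw [hσinv]
      _ = ρ ∘ₗ (TensorProduct.mk k H H).flip 1 := conv_unit_left _
  have part1 : ∀ a : H, σ a = ρ (a ⊗ₜ[k] (1 : H)) := by
    intro a
    have := LinearMap.congr_fun final a
    simpa using this
  refine ⟨part1, fun a b => ?_⟩
  rw [part1, part1]
  have := LinearMap.congr_fun hρ_assoc (a ⊗ₜ[k] (b ⊗ₜ[k] (1 : H)))
  simpa using this.symm
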